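/- arXiv:1105.1325 — 2 statements merged into one kernel-verified Lean document; each statement's English description precedes it below -/
import Mathlib

section
/- If f: F_2^n → {0,1} is odd-cycle-free and not identically zero, then the set H' = {x_1+...+x_k : x_1,...,x_k ∈ supp(f), k ≥ 0 even} is an F_2-linear subspace of span(supp(f)) of codimension 1, and H' ∩ supp(f) = ∅. -/
open Finset
open scoped Classical

abbrev V (n : ℕ) : Type := Fin n → ZMod 2

def dotp {n : ℕ} (α x : V n) : ZMod 2 := ∑ i, α i * x i

def IsBool {n : ℕ} (f : V n → ℝ) : Prop := ∀ x, f x = 0 ∨ f x = 1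

/-- `f` is odd-cycle-free: no odd `k` and `x_1,…,x_k` in the support summing to `0`. -/
def OCF {n : ℕ} (f : V n → ℝ) : Prop :=
  ∀ k : ℕ, Odd k → ¬ ∃ x : Fin k → V n, (∀ i, f (x i) = 1) ∧ (∑ i, x i) = 0

noncomputable def fhat {n : ℕ} (f : V n → ℝ) (α : V n) : ℝ :=
  (∑ x : V n, f x * (-1 : ℝ) ^ (dotp α x).val) / 2 ^ n

/-- `f` is `ε`-far from odd-cycle-free: every Boolean OCF function differs from `f`
on at least `ε·2^n` points. -/
def FarFromOCF {n : ℕ} (ε : ℝ) (f : V n → ℝ) : Prop :=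
  ∀ g : V n → ℝ, IsBool g → OCF g →
    ε * 2 ^ n ≤ ((Finset.univ.filter fun x => f x ≠ g x).card : ℝ)

lemma addself {n : ℕ} (x : V n) : x + x = 0 := by
  ext i
  exact CharTwo.add_self_eq_zero _

lemma sum_append' {n m k : ℕ} (x1 : Fin m → V n) (x2 : Fin k → V n) :
    ∑ i, Fin.append x1 x2 i = (∑ i, x1 i) + ∑ i, x2 i := by
  simp [Fin.sum_univ_add, Fin.append_left, Fin.append_right]

/-- The submodule of all sums of support elements. -/
def T {n : ℕ} (f : V n → ℝ) : Submodule (ZMod 2) (V n) where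
  carrier := {y | ∃ (k : ℕ) (x : Fin k → V n), (∀ i, f (x i) = 1) ∧ y = ∑ i, x i}
  zero_mem' := ⟨0, Fin.elim0, fun i => i.elim0, by simp⟩
  add_mem' := by
    rintro a b ⟨k1, x1, h1, rfl⟩ ⟨k2, x2, h2, rfl⟩
    refine ⟨k1 + k2, Fin.append x1 x2, ?_, (sum_append' x1 x2).symm⟩
    intro i
    refine i.addCases (fun j => ?_) (fun j => ?_)
    · rw [Fin.append_left]; exact h1 j
    · rw [Fin.append_right]; exact h2 j
  smul_mem' := by
    intro c y hy
    fin_cases c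
    · exact ⟨0, Fin.elim0, fun i => i.elim0, by simp; exact zero_smul (ZMod 2) y⟩
    · change (1 : ZMod 2) • y ∈ _; simpa using hy

lemma T_eq_span {n : ℕ} (f : V n → ℝ) :
    T f = Submodule.span (ZMod 2) {x | f x = 1} := by
  apply le_antisymm
  · rintro y ⟨k, x, hx, rfl⟩
    exact Submodule.sum_mem _ fun i _ => Submodule.subset_span (hx i)
  · rw [Submodule.span_le]
    intro x hx
    exact ⟨1, fun _ => x, fun _ => hx, by simp⟩

theorem stmt1 {n : ℕ} (f : V n → ℝ) (hf : IsBool f) (hocf : OCF f)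
    (hnz : ∃ x, f x = 1) :
    ∃ H' : Submodule (ZMod 2) (V n),
      (↑H' : Set (V n)) =
        {y | ∃ (k : ℕ) (x : Fin k → V n), Even k ∧ (∀ i, f (x i) = 1) ∧ y = ∑ i, x i} ∧
      H' ≤ Submodule.span (ZMod 2) {x | f x = 1} ∧
      (∀ x, f x = 1 → x ∉ H') ∧
      (∀ v ∈ Submodule.span (ZMod 2) {x | f x = 1}, v ∉ H' →
        H' ⊔ Submodule.span (ZMod 2) {v} = Submodule.span (ZMod 2) {x | f x = 1}) := by
  classical
  refine ⟨{ carrier := {y | ∃ (k : ℕ) (x : Fin k → V n), Even k ∧ (∀ i, f (x i) = 1) ∧ y = ∑ i, x i}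
            zero_mem' := ⟨0, Fin.elim0, Even.zero, fun i => i.elim0, by simp⟩
            add_mem' := ?_
            smul_mem' := ?_ }, rfl, ?_, ?_, ?_⟩
  · rintro a b ⟨k1, x1, he1, h1, rfl⟩ ⟨k2, x2, he2, h2, rfl⟩
    refine ⟨k1 + k2, Fin.append x1 x2, he1.add he2, ?_, (sum_append' x1 x2).symm⟩
    intro i
    refine i.addCases (fun j => ?_) (fun j => ?_)
    · rw [Fin.append_left]; exact h1 j
    · rw [Fin.append_right]; exact h2 j
  · intro c y hy
    fin_cases c
    · exact ⟨0, Fin.elim0, Even.zero, fun i => i.elim0, by simp; exact zero_smul (ZMod 2) y⟩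
    · change (1 : ZMod 2) • y ∈ _; simpa using hy
  · rintro y ⟨k, x, _, hx, rfl⟩
    exact Submodule.sum_mem _ fun i _ => Submodule.subset_span (hx i)
  · rintro x hx ⟨k, y, hke, hy, hxy⟩
    refine hocf (k + 1) (Even.add_one hke) ⟨Fin.cons x y, ?_, ?_⟩
    · intro i
      refine i.cases ?_ (fun j => ?_)
      · simpa using hx
      · simpa using hy j
    · simp only [Fin.sum_univ_succ, Fin.cons_zero, Fin.cons_succ, ← hxy]
      exact addself x
  · intro v hv hvH
    apply le_antisymm
    · refine sup_le ?_ ?_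
      · rintro y ⟨k, x, _, hx, rfl⟩
        exact Submodule.sum_mem _ fun i _ => Submodule.subset_span (hx i)
      · rw [Submodule.span_le, Set.singleton_subset_iff]
        exact hv
    · intro y hy
      rw [← T_eq_span] at hv hy
      obtain ⟨kv, xv, hxv, rfl⟩ := hv
      obtain ⟨k, x, hx, rfl⟩ := hy
      rcases Nat.even_or_odd k with hke | hko
      · exact Submodule.mem_sup_left ⟨k, x, hke, hx, rfl⟩
      · rcases Nat.even_or_odd kv with hkve | hkvo
        · exact absurd ⟨kv, xv, hkve, hxv, rfl⟩ hvH
        · have hmem : (∑ i, x i) + ∑ i, xv i ∈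
              ({y | ∃ (k : ℕ) (x : Fin k → V n), Even k ∧ (∀ i, f (x i) = 1) ∧ y = ∑ i, x i} : Set (V n)) := by
            refine ⟨k + kv, Fin.append x xv, hko.add_odd hkvo, ?_, (sum_append' x xv).symm⟩
            intro i
            refine i.addCases (fun j => ?_) (fun j => ?_)
            · rw [Fin.append_left]; exact hx j
            · rw [Fin.append_right]; exact hxv j
          have : (∑ i, x i) = ((∑ i, x i) + ∑ i, xv i) + ∑ i, xv i := by
            rw [add_assoc, addself, add_zero]
          rw [this]
          exact Submodule.add_mem _ (Submodule.mem_sup_left hmem)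
            (Submodule.mem_sup_right (Submodule.mem_span_singleton_self _))
end

section
/- A function f: F_2^n → {0,1} is ε-far from odd-cycle-free if and only if f̂(β) ≥ −ρ + 2ε for every β ∈ F_2^n, where ρ is the density of f. -/
open Finset
open scoped Classical

lemma zmod2_cases : ∀ a : ZMod 2, a = 0 ∨ a = 1 := by decide

lemma zmod2_ne_zero {a : ZMod 2} (h : a ≠ 0) : a = 1 := by
  rcases zmod2_cases a with h0 | h1
  · exact absurd h0 h
  · exact h1

/-- `dotp β` as a linear map. -/
def dotL {n : ℕ} (β : V n) : V n →ₗ[ZMod 2] ZMod 2 where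
  toFun := dotp β
  map_add' x y := by simp [dotp, mul_add, Finset.sum_add_distrib]
  map_smul' c x := by
    simp only [dotp, Pi.smul_apply, smul_eq_mul, RingHom.id_apply, Finset.mul_sum]
    exact Finset.sum_congr rfl fun i _ => by ring

lemma dotp_sum {n k : ℕ} (β : V n) (x : Fin k → V n) :
    dotp β (∑ i, x i) = ∑ i, dotp β (x i) :=
  map_sum (dotL β) x Finset.univ

lemma dotp_zero_right {n : ℕ} (β : V n) : dotp β 0 = 0 := by simp [dotp]

/-- counting identity: `(f̂(β) + f̂(0)) 2^n = 2 |{x : f x = 1, β·x = 0}|`. -/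
lemma count_eq {n : ℕ} (f : V n → ℝ) (hf : IsBool f) (β : V n) :
    (fhat f β + fhat f 0) * 2 ^ n =
      2 * ((Finset.univ.filter fun x => f x = 1 ∧ dotp β x = 0).card : ℝ) := by
  have h2 : (2:ℝ) ^ n ≠ 0 := by positivity
  unfold fhat
  rw [← add_div, div_mul_cancel₀ _ h2, ← Finset.sum_add_distrib]
  have key : ∀ x : V n,
      f x * (-1:ℝ) ^ (dotp β x).val + f x * (-1:ℝ) ^ (dotp (0:V n) x).val
        = if f x = 1 ∧ dotp β x = 0 then (2:ℝ) else 0 := by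
    intro x
    have hz : dotp (0 : V n) x = 0 := by simp [dotp]
    rw [hz]
    rcases hf x with h | h <;> rcases zmod2_cases (dotp β x) with hb | hb <;>
      simp [h, hb, ZMod.val_zero, ZMod.val_one] <;>
      norm_num
  rw [Finset.sum_congr rfl fun x _ => key x, ← Finset.sum_filter,
    Finset.sum_const, nsmul_eq_mul, mul_comm]

/-- structural lemma: the support of an OCF function lies in an affine hyperplane. -/
lemma exists_beta {n : ℕ} (g : V n → ℝ) (hOCF : OCF g) :
    ∃ β : V n, ∀ x, g x = 1 → dotp β x = 1 := by
  by_cases hS : ∃ s0 : V n, g s0 = 1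
  swap
  · exact ⟨0, fun x hx => absurd ⟨x, hx⟩ hS⟩
  obtain ⟨s0, hs0⟩ := hS
  have hVadd : ∀ v : V n, v + v = 0 := by
    intro v; funext i; exact (by decide : ∀ a : ZMod 2, a + a = 0) (v i)
  set G : Set (V n) := {v | ∃ s, g s = 1 ∧ v = s0 + s} with hG
  set W := Submodule.span (ZMod 2) G with hW
  have hmem : ∀ v ∈ W, ∃ (k : ℕ) (x : Fin k → V n),
      Even k ∧ (∀ i, g (x i) = 1) ∧ ∑ i, x i = v := by
    intro v hv
    induction hv using Submodule.span_induction with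
    | mem v hvG =>
        obtain ⟨s, hs, rfl⟩ := hvG
        exact ⟨2, ![s0, s], even_two, by intro i; fin_cases i <;> simpa,
          by simp [Fin.sum_univ_two]⟩
    | zero => exact ⟨0, ![], Even.zero, fun i => i.elim0, by simp⟩
    | add u w hu' hw' hu hw =>
        obtain ⟨k1, x1, he1, hg1, hs1⟩ := hu
        obtain ⟨k2, x2, he2, hg2, hs2⟩ := hw
        refine ⟨k1 + k2, Fin.append x1 x2, he1.add he2, ?_, ?_⟩
        · intro i
          refine Fin.addCases (fun j => ?_) (fun j => ?_) i
          · rw [Fin.append_left]; exact hg1 j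
          · rw [Fin.append_right]; exact hg2 j
        · rw [Fin.sum_univ_add]
          simp only [Fin.append_left, Fin.append_right, hs1, hs2]
    | smul c v hv' hvind =>
        rcases zmod2_cases c with rfl | rfl
        · exact ⟨0, ![], Even.zero, fun i => i.elim0, by simp⟩
        · simpa using hvind
  have hs0W : s0 ∉ W := by
    intro hs0W
    obtain ⟨k, x, hke, hgx, hsum⟩ := hmem s0 hs0W
    refine hOCF (k+1) hke.add_one ⟨Fin.cons s0 x, ?_, ?_⟩
    · intro i
      refine Fin.cases ?_ ?_ i
      · simpa using hs0
      · intro j; simpa using hgx j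
    · rw [Fin.sum_univ_succ]
      simp only [Fin.cons_zero, Fin.cons_succ, hsum]
      exact hVadd s0
  have hq : (W.mkQ s0) ≠ 0 := by
    rw [Submodule.mkQ_apply, Ne, Submodule.Quotient.mk_eq_zero]; exact hs0W
  have hex : ¬ ∀ φ : Module.Dual (ZMod 2) (V n ⧸ W), φ (W.mkQ s0) = 0 := by
    rw [Module.forall_dual_apply_eq_zero_iff]
    exact hq
  obtain ⟨φ, hφ⟩ := not_forall.mp hex
  set ψ : V n →ₗ[ZMod 2] ZMod 2 := φ.comp W.mkQ with hψ
  have hψW : ∀ w ∈ W, ψ w = 0 := by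
    intro w hw
    have h0 : W.mkQ w = 0 := by
      rw [Submodule.mkQ_apply, Submodule.Quotient.mk_eq_zero]; exact hw
    simp [hψ, LinearMap.comp_apply, h0]
  have hψs0 : ψ s0 = 1 := zmod2_ne_zero hφ
  refine ⟨fun i => ψ (Pi.single i (1 : ZMod 2)), fun x hx => ?_⟩
  have hdx : dotp (fun i => ψ (Pi.single i (1 : ZMod 2))) x = ψ x := by
    rw [LinearMap.pi_apply_eq_sum_univ ψ x]
    refine (Finset.sum_congr rfl fun i _ => ?_).symm
    have hsingle : ((Pi.single i (1 : ZMod 2) : V n)) = fun j => if i = j then 1 else 0 := by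
      funext j; simp [Pi.single_apply, eq_comm]
    rw [← hsingle, smul_eq_mul, mul_comm]
  rw [hdx]
  have hxW : s0 + x ∈ W := Submodule.subset_span ⟨x, hx, rfl⟩
  have hxs : x = s0 + (s0 + x) := by rw [← add_assoc, hVadd s0, zero_add]
  rw [hxs, map_add, hψs0, hψW _ hxW, add_zero]

theorem stmt4 {n : ℕ} (f : V n → ℝ) (hf : IsBool f) (ε : ℝ) :
    FarFromOCF ε f ↔ ∀ β : V n, fhat f β ≥ - fhat f 0 + 2 * ε := by
  have h2 : (0:ℝ) < 2 ^ n := by positivity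
  constructor
  · intro hFar β
    set g : V n → ℝ := fun x => if dotp β x = 1 then f x else 0 with hg
    have hgB : IsBool g := by
      intro x; by_cases h : dotp β x = 1 <;> simp [hg, h, hf x]
    have hgO : OCF g := by
      intro k hk hex
      obtain ⟨x, hx1, hx0⟩ := hex
      have hd : ∀ i, dotp β (x i) = 1 := by
        intro i
        by_contra hne
        have h1 := hx1 i
        simp [hg, hne] at h1
      have h1 : dotp β (∑ i, x i) = ∑ i : Fin k, (1 : ZMod 2) := by
        rw [dotp_sum]
        exact Finset.sum_congr rfl fun i _ => hd i
      rw [hx0, dotp_zero_right] at h1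
      obtain ⟨m, hm⟩ := hk
      rw [Finset.sum_const, Finset.card_univ, Fintype.card_fin, hm] at h1
      have hsm : ((2 * m + 1) • (1 : ZMod 2)) = 1 := by
        rw [nsmul_eq_mul, mul_one]
        push_cast
        rw [(by decide : (2 : ZMod 2) = 0)]
        ring
      rw [hsm] at h1
      exact (by decide : (0 : ZMod 2) ≠ 1) h1
    have hle := hFar g hgB hgO
    have hdiff : (univ.filter fun x => f x ≠ g x)
        = univ.filter fun x => f x = 1 ∧ dotp β x = 0 := by
      ext x
      simp only [mem_filter, mem_univ, true_and]
      rcases zmod2_cases (dotp β x) with hb | hb <;> rcases hf x with h | h <;>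
        simp [hg, hb, h]
    rw [hdiff] at hle
    have hcount := count_eq f hf β
    have h2e : 2 * ε ≤ fhat f β + fhat f 0 := by
      have hm : (2 * ε) * 2 ^ n ≤ (fhat f β + fhat f 0) * 2 ^ n := by
        rw [hcount]
        nlinarith
      exact le_of_mul_le_mul_right hm h2
    linarith
  · intro H g hgB hgO
    obtain ⟨β, hβ⟩ := exists_beta g hgO
    have hsub : (univ.filter fun x => f x = 1 ∧ dotp β x = 0)
        ⊆ univ.filter fun x => f x ≠ g x := by
      intro x hx
      simp only [mem_filter, mem_univ, true_and] at hx ⊢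
      obtain ⟨hfx, hdx⟩ := hx
      rcases hgB x with hg0 | hg1
      · rw [hfx, hg0]; norm_num
      · have hd1 := hβ x hg1
        rw [hd1] at hdx
        exact absurd hdx (by decide)
    have hcard : ((univ.filter fun x => f x = 1 ∧ dotp β x = 0).card : ℝ)
        ≤ ((univ.filter fun x => f x ≠ g x).card : ℝ) :=
      Nat.cast_le.mpr (Finset.card_le_card hsub)
    have hcount := count_eq f hf β
    have hβ' := H β
    nlinarith
end
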